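/- Let f : (X, ∂, ξ) → (Y, ∂', ξ') be a surjective morphism of precrossed B-modules of groups, let η : X → X/⟨ker f, ⊤⟩ be the quotient by the Peiffer commutator of ker f with X, and let f̄ : X/⟨ker f, ⊤⟩ → Y be the induced morphism. For every surjective morphism of precrossed B-modules g : (Z, ∂'', ξ'') → (Y, ∂', ξ') with trivial Peiffer commutator ⟨ker g, ⊤⟩ = ⊥, and every morphism of precrossed B-modules h : X → Z with g ∘ h = f, there exists a unique morphism of precrossed B-modules h̄ : X/⟨ker f, ⊤⟩ → Z with h̄ ∘ η = h. -/

import Mathlib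

variable {B X Y Z : Type*} [Group B] [Group X] [Group Y] [Group Z]

/-- `(X, δ, ξ)` is a precrossed `B`-module of groups:
`δ : X →* B` satisfies `δ (ξ b x) = b * δ x * b⁻¹`. -/
def IsPrecrossedMod (δ : X →* B) (ξ : B →* MulAut X) : Prop :=
  ∀ (b : B) (x : X), δ (ξ b x) = b * δ x * b⁻¹

/-- A subgroup invariant under the `B`-action, i.e. a precrossed submodule. -/
def IsBInvariant (ξ : B →* MulAut X) (M : Subgroup X) : Prop :=
  ∀ (b : B), ∀ m ∈ M, ξ b m ∈ M

/-- The Peiffer commutator `⟨M, N⟩` of two precrossed submodules: the subgroup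
generated by the Peiffer elements `m * n * m⁻¹ * (ξ (δ m) n)⁻¹` and
`n * m * n⁻¹ * (ξ (δ n) m)⁻¹` for `m ∈ M`, `n ∈ N`. -/
def peifferCommutator (δ : X →* B) (ξ : B →* MulAut X) (M N : Subgroup X) : Subgroup X :=
  Subgroup.closure
    ({y | ∃ m ∈ M, ∃ n ∈ N, y = m * n * m⁻¹ * (ξ (δ m) n)⁻¹} ∪
     {y | ∃ m ∈ M, ∃ n ∈ N, y = n * m * n⁻¹ * (ξ (δ n) m)⁻¹})

/-- `f` is a morphism of precrossed `B`-modules. -/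
def IsPXModHom (δ : X →* B) (ξ : B →* MulAut X) (δ' : Y →* B) (ξ' : B →* MulAut Y)
    (f : X →* Y) : Prop :=
  (∀ x : X, δ' (f x) = δ x) ∧ ∀ (b : B) (x : X), f (ξ b x) = ξ' b (f x)

/-- universal property of the centralization: any morphism `h` from the
extension `f` to a central extension `g` (i.e. one with `⟨ker g, ⊤⟩ = ⊥`) factors
uniquely through the quotient `η : X → X/⟨ker f, ⊤⟩`. -/
theorem centralization_universal
    (δ : X →* B) (ξ : B →* MulAut X) (hpre : IsPrecrossedMod δ ξ)
    (δ' : Y →* B) (ξ' : B →* MulAut Y) (hpre' : IsPrecrossedMod δ' ξ')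
    (f : X →* Y) (hf : Function.Surjective f) (hfhom : IsPXModHom δ ξ δ' ξ' f)
    [hn : (peifferCommutator δ ξ f.ker ⊤).Normal]
    (hinv : IsBInvariant ξ (peifferCommutator δ ξ f.ker ⊤))
    -- the induced precrossed `B`-module structure on the quotient `X/⟨ker f, ⊤⟩`
    (δb : X ⧸ peifferCommutator δ ξ f.ker ⊤ →* B)
    (hδb : ∀ x : X, δb (QuotientGroup.mk x) = δ x)
    (ξb : B →* MulAut (X ⧸ peifferCommutator δ ξ f.ker ⊤))
    (hξb : ∀ (b : B) (x : X), ξb b (QuotientGroup.mk x) = QuotientGroup.mk (ξ b x))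
    -- a central extension `g : Z → Y`
    (δ'' : Z →* B) (ξ'' : B →* MulAut Z) (hpre'' : IsPrecrossedMod δ'' ξ'')
    (g : Z →* Y) (hg : Function.Surjective g) (hghom : IsPXModHom δ'' ξ'' δ' ξ' g)
    (hgcentral : peifferCommutator δ'' ξ'' g.ker ⊤ = ⊥)
    -- a morphism `h` from `f` to `g`
    (h : X →* Z) (hhhom : IsPXModHom δ ξ δ'' ξ'' h) (hcomm : ∀ x : X, g (h x) = f x) :
    ∃! hbar : X ⧸ peifferCommutator δ ξ f.ker ⊤ →* Z,
      IsPXModHom δb ξb δ'' ξ'' hbar ∧ ∀ x : X, hbar (QuotientGroup.mk x) = h x := by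
  -- h kills the Peiffer commutator of ker f
  have hker : ∀ x ∈ peifferCommutator δ ξ f.ker ⊤, h x = 1 := by
    intro x hx
    have : h x ∈ peifferCommutator δ'' ξ'' g.ker ⊤ := by
      refine Subgroup.closure_induction (p := fun x _ => h x ∈ peifferCommutator δ'' ξ'' g.ker ⊤) ?_ (by simpa using one_mem _) ?_ ?_ hx
      · rintro y (⟨m, hm, n, -, rfl⟩ | ⟨m, hm, n, -, rfl⟩)
        · apply Subgroup.subset_closure
          left
          refine ⟨h m, ?_, h n, trivial, ?_⟩
          · simp [MonoidHom.mem_ker, hcomm, MonoidHom.mem_ker.mp hm]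
          · simp [hhhom.2, hhhom.1]
        · apply Subgroup.subset_closure
          right
          refine ⟨h m, ?_, h n, trivial, ?_⟩
          · simp [MonoidHom.mem_ker, hcomm, MonoidHom.mem_ker.mp hm]
          · simp [hhhom.2, hhhom.1]
      · intro a b _ _ ha hb; rw [map_mul]; exact mul_mem ha hb
      · intro a _ ha; rw [map_inv]; exact inv_mem ha
    rw [hgcentral] at this
    simpa using this
  refine ⟨QuotientGroup.lift _ h (fun x hx => hker x hx), ⟨⟨?_, ?_⟩, fun x => rfl⟩, ?_⟩
  · intro q
    induction q using QuotientGroup.induction_on with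
    | H x => rw [hδb]; exact hhhom.1 x
  · intro b q
    induction q using QuotientGroup.induction_on with
    | H x => rw [hξb]; exact hhhom.2 b x
  · intro k ⟨_, hk⟩
    ext x
    simp [hk]; rfl
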